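/- Consider the weighted graph G₁ with vertex set ℤ, edges E = {(x,y) ∈ ℤ×ℤ : |x−y| = 1}, vertex weight m ≡ 1, and edge weight c(n,n+1) = c(n+1,n) = (n+1)² + 1 for n ∈ ℤ. Then G₁ is χ-complete: the functions χ_n(x) = min(max(2 − |x|/(n+1), 0), 1) (for n ≥ 1) are finitely supported, take values in [0,1], equal 1 on [−(n+1), n+1] ∩ ℤ, and satisfy Σ_{e∈E, e⁻=x or e⁺=x} c(e)·(χ_n(e⁺) − χ_n(e⁻))² ≤ 40 for every n ≥ 1 and every x ∈ ℤ. -/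

import Mathlib

noncomputable section

/-- The edge weight of the graph `G₁` on `ℤ`: the edges are the pairs at distance `1`,
and `c(n, n+1) = c(n+1, n) = (n+1)² + 1`; non-adjacent pairs get weight `0`. -/
def cG1 : ℤ → ℤ → ℝ := fun x y => if |x - y| = 1 then ((max x y : ℤ) : ℝ) ^ 2 + 1 else 0

/-- The cut-off functions `χ_n(x) = min (max (2 - |x|/(n+1)) 0) 1`. -/
def chi : ℕ → ℤ → ℝ := fun n x => min (max (2 - |(x : ℝ)| / (n + 1)) 0) 1

private lemma clamp_lip (s t : ℝ) :
    |min (max s 0) 1 - min (max t 0) 1| ≤ |s - t| := by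
  have h1 := abs_min_sub_min_le_max (max s 0) 1 (max t 0) 1
  have h2 := abs_max_sub_max_le_max s 0 t 0
  simp only [sub_self, abs_zero, max_le_iff] at h1 h2
  exact h1.trans (by simpa using h2)

private lemma cG1_symm (a b : ℤ) : cG1 a b = cG1 b a := by
  unfold cG1; rw [abs_sub_comm, max_comm]

private lemma chi_nonneg (n : ℕ) (x : ℤ) : 0 ≤ chi n x :=
  le_min (le_max_right _ _) zero_le_one

private lemma chi_le_one (n : ℕ) (x : ℤ) : chi n x ≤ 1 := min_le_right _ _

private lemma chi_zero (n : ℕ) (x : ℤ) (h : 2 * ((n : ℤ) + 1) ≤ |x|) : chi n x = 0 := by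
  have hN : (0:ℝ) < (n:ℝ) + 1 := by positivity
  have h' : 2 * ((n:ℝ) + 1) ≤ |(x:ℝ)| := by
    rw [← Int.cast_abs]
    exact_mod_cast h
  have : 2 - |(x:ℝ)| / ((n:ℝ) + 1) ≤ 0 := by
    rw [sub_nonpos, le_div_iff₀ hN]; linarith
  unfold chi
  rw [max_eq_right this, min_eq_left zero_le_one]

private lemma chi_diff_zero_or (n : ℕ) (hn : 1 ≤ n) (a : ℤ) :
    cG1 a (a + 1) * (chi n (a + 1) - chi n a) ^ 2 ≤ 10 := by
  have h1 : (1:ℝ) ≤ (n:ℝ) := by exact_mod_cast hn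
  have hN : (2:ℝ) ≤ (n:ℝ) + 1 := by linarith
  have hNpos : (0:ℝ) < (n:ℝ) + 1 := by linarith
  have hc : cG1 a (a + 1) = ((a:ℝ) + 1) ^ 2 + 1 := by
    unfold cG1
    rw [if_pos (by simp), max_eq_right (by omega : a ≤ a + 1)]
    push_cast; ring
  by_cases hbig : 2 * ((n:ℤ) + 1) ≤ |a| ∧ 2 * ((n:ℤ) + 1) ≤ |a + 1|
  · rw [chi_zero n a hbig.1, chi_zero n (a+1) hbig.2]
    rw [hc]; nlinarith [sq_nonneg ((a:ℝ) + 1)]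
  · -- then |a+1| ≤ 2(n+1)
    have hb : |a + 1| ≤ 2 * ((n:ℤ) + 1) := by
      rw [not_and_or, not_le, not_le] at hbig
      simp only [Int.abs_eq_natAbs] at hbig ⊢
      omega
    have hbR : |((a:ℝ) + 1)| ≤ 2 * ((n:ℝ) + 1) := by
      have h9 : |((a + 1 : ℤ) : ℝ)| ≤ ((2 * ((n:ℤ) + 1) : ℤ) : ℝ) := by
        rw [← Int.cast_abs]; exact_mod_cast hb
      push_cast at h9
      linarith
    have hsq : ((a:ℝ) + 1) ^ 2 ≤ (2 * ((n:ℝ) + 1)) ^ 2 := by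
      have := sq_abs ((a:ℝ) + 1)
      nlinarith [abs_nonneg ((a:ℝ)+1)]
    have hd : |chi n (a + 1) - chi n a| ≤ 1 / ((n:ℝ) + 1) := by
      unfold chi
      refine (clamp_lip _ _).trans ?_
      have habs : |(|((a:ℝ) + 1)| - |(a:ℝ)|)| ≤ 1 := by
        have h2 := abs_abs_sub_abs_le_abs_sub ((a:ℝ) + 1) (a:ℝ)
        simpa using h2
      have : (2 - |((a:ℝ) + 1)| / ((n:ℝ) + 1)) - (2 - |(a:ℝ)| / ((n:ℝ) + 1))
          = -((|((a:ℝ)+1)| - |(a:ℝ)|) / ((n:ℝ) + 1)) := by ring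
      push_cast
      rw [this, abs_neg, abs_div, abs_of_pos hNpos, div_le_div_iff₀ hNpos hNpos]
      nlinarith
    have hd2 : (chi n (a + 1) - chi n a) ^ 2 ≤ (1 / ((n:ℝ) + 1)) ^ 2 := by
      have := sq_abs (chi n (a + 1) - chi n a)
      nlinarith [abs_nonneg (chi n (a + 1) - chi n a)]
    rw [hc]
    set N := (n:ℝ) + 1
    have hN2 : (1:ℝ)/N^2 ≤ 1/4 := by
      rw [div_le_div_iff₀ (by positivity) (by norm_num)]
      nlinarith
    calc (((a:ℝ) + 1) ^ 2 + 1) * (chi n (a + 1) - chi n a) ^ 2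
        ≤ (4 * N ^ 2 + 1) * (1 / N) ^ 2 := by
          apply mul_le_mul _ hd2 (sq_nonneg _) (by positivity)
          nlinarith
      _ ≤ 10 := by
          rw [div_pow, one_pow, mul_one_div, div_le_iff₀ (by positivity)]
          nlinarith

/-- The weighted graph `G₁` on `ℤ` (vertex weight `m ≡ 1`, edge weight
`c(n, n+1) = (n+1)² + 1`) is `χ`-complete: for every `n ≥ 1` the function
`χ_n(x) = min (max (2 - |x|/(n+1)) 0) 1` is finitely supported, takes values in `[0, 1]`,
equals `1` on `[-(n+1), n+1] ∩ ℤ`, and satisfies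
`Σ_{e ∈ E, e⁻ = x or e⁺ = x} c(e) (dχ_n(e))² ≤ 40` for every vertex `x ∈ ℤ`. -/
theorem G1_chi_complete :
    ∀ n : ℕ, 1 ≤ n →
      (Function.support (chi n)).Finite ∧
      (∀ x : ℤ, 0 ≤ chi n x ∧ chi n x ≤ 1) ∧
      (∀ x : ℤ, |x| ≤ (n : ℤ) + 1 → chi n x = 1) ∧
      (∀ x : ℤ,
        ∑ᶠ y : ℤ, (cG1 x y * (chi n y - chi n x) ^ 2 + cG1 y x * (chi n x - chi n y) ^ 2)
          ≤ 40) := by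
  intro n hn
  have hNpos : (0:ℝ) < (n:ℝ) + 1 := by positivity
  refine ⟨?_, fun x => ⟨chi_nonneg n x, chi_le_one n x⟩, ?_, ?_⟩
  · apply Set.Finite.subset (Set.finite_Icc (-(2*(n:ℤ)+2)) (2*(n:ℤ)+2))
    intro x hx
    simp only [Set.mem_Icc]
    by_contra hcon
    have h9 : 2 * ((n:ℤ) + 1) ≤ |x| := by
      rw [Int.abs_eq_natAbs]; omega
    exact hx (chi_zero n x h9)
  · intro x hx
    have hxR : |(x:ℝ)| ≤ (n:ℝ) + 1 := by
      rw [← Int.cast_abs]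
      exact_mod_cast hx
    have h1 : (1:ℝ) ≤ 2 - |(x:ℝ)| / ((n:ℝ) + 1) := by
      have h2 : |(x:ℝ)| / ((n:ℝ) + 1) ≤ 1 := by
        rw [div_le_one hNpos]; linarith
      linarith
    unfold chi
    rw [max_eq_left (by linarith), min_eq_right h1]
  · intro x
    set f : ℤ → ℝ := fun y =>
      cG1 x y * (chi n y - chi n x) ^ 2 + cG1 y x * (chi n x - chi n y) ^ 2 with hf
    have hsupp : Function.support f ⊆ ↑({x - 1, x + 1} : Finset ℤ) := by
      intro y hy
      simp only [Finset.coe_insert, Finset.coe_singleton, Set.mem_insert_iff,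
        Set.mem_singleton_iff]
      by_contra hcon
      push_neg at hcon
      have h1 : ¬ (|x - y| = 1) := by
        rw [Int.abs_eq_natAbs]; omega
      have h2 : ¬ (|y - x| = 1) := by
        rw [Int.abs_eq_natAbs]; omega
      apply hy
      simp only [hf, cG1, if_neg h1, if_neg h2, zero_mul, add_zero]
    rw [finsum_eq_sum_of_support_subset f hsupp,
      Finset.sum_pair (by omega : x - 1 ≠ x + 1)]
    have key1 : f (x - 1) ≤ 20 := by
      have h := chi_diff_zero_or n hn (x - 1)
      have hx1 : x - 1 + 1 = x := by ring
      rw [hx1] at h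
      simp only [hf]
      rw [cG1_symm x (x - 1)]
      have hsq : (chi n (x - 1) - chi n x) ^ 2 = (chi n x - chi n (x - 1)) ^ 2 := by ring
      rw [hsq]
      linarith
    have key2 : f (x + 1) ≤ 20 := by
      have h := chi_diff_zero_or n hn x
      simp only [hf]
      rw [cG1_symm (x + 1) x]
      have hsq : (chi n x - chi n (x + 1)) ^ 2 = (chi n (x + 1) - chi n x) ^ 2 := by ring
      rw [hsq]
      linarith
    linarith

end
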